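/- Let Ω: TM → V be a virtual immersion with skew-symmetric second fundamental form II. Then the covariant derivative of II (with respect to the flat connection D on M × V) is tangential and satisfies (D_X II)(Y,Z) = −R(Y,Z)X, where R(X,Y)Z = ∇_Y∇_X Z − ∇_X∇_Y Z + ∇_{[X,Y]}Z. -/

import Mathlib

/-- (In the chart model where the manifold is a finite-dimensional
real vector space `E` and the flat connection `D` is `fderiv`.) For a virtual
immersion `Ω` with skew-symmetric second fundamental form `II`, the covariant
derivative of `II` is tangential and
`(D_X II)(Y,Z) = −R(Y,Z)X`, with `R(X,Y)Z = ∇_Y∇_X Z − ∇_X∇_Y Z + ∇_{[X,Y]}Z`. -/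
theorem stmt_16 {E V : Type*}
    [NormedAddCommGroup E] [NormedSpace ℝ E] [FiniteDimensional ℝ E]
    [NormedAddCommGroup V] [NormedSpace ℝ V] [FiniteDimensional ℝ V]
    -- the nondegenerate symmetric bilinear form on V
    (B : V →ₗ[ℝ] V →ₗ[ℝ] ℝ) (hBsymm : ∀ u v : V, B u v = B v u)
    (hBnd : ∀ u : V, (∀ v : V, B u v = 0) → u = 0)
    -- the Riemannian metric g
    (g : E → E →ₗ[ℝ] E →ₗ[ℝ] ℝ) (hgsymm : ∀ p (v w : E), g p v w = g p w v)
    (hgpos : ∀ p (v : E), v ≠ 0 → 0 < g p v v)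
    -- the V-valued one-form Ω, satisfying condition (a)
    (Ω : E → (E →L[ℝ] V)) (hΩ : ContDiff ℝ (⊤ : ℕ∞) Ω)
    (ha : ∀ p (v w : E), B (Ω p v) (Ω p w) = g p v w)
    -- condition (b): ⟨dΩ(X,Y), Ω(Z)⟩ = 0
    (hb : ∀ X Y : E → E, ContDiff ℝ (⊤ : ℕ∞) X → ContDiff ℝ (⊤ : ℕ∞) Y → ∀ p (z : E),
        B (fderiv ℝ (fun q => Ω q (Y q)) p (X p)
            - fderiv ℝ (fun q => Ω q (X q)) p (Y p)
            - Ω p (fderiv ℝ Y p (X p) - fderiv ℝ X p (Y p))) (Ω p z) = 0)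
    -- the Levi-Civita connection ∇ of g: torsion-free and metric
    (nabla : (E → E) → (E → E) → (E → E))
    (hns : ∀ X Y : E → E, ContDiff ℝ (⊤ : ℕ∞) X → ContDiff ℝ (⊤ : ℕ∞) Y →
      ContDiff ℝ (⊤ : ℕ∞) (nabla X Y))
    (htf : ∀ X Y : E → E, ContDiff ℝ (⊤ : ℕ∞) X → ContDiff ℝ (⊤ : ℕ∞) Y →
      ∀ p, nabla X Y p - nabla Y X p = fderiv ℝ Y p (X p) - fderiv ℝ X p (Y p))
    (hmetric : ∀ X Y Z : E → E, ContDiff ℝ (⊤ : ℕ∞) X → ContDiff ℝ (⊤ : ℕ∞) Y →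
      ContDiff ℝ (⊤ : ℕ∞) Z → ∀ p,
      fderiv ℝ (fun q => g q (Y q) (Z q)) p (X p)
        = g p (nabla X Y p) (Z p) + g p (Y p) (nabla X Z p))
    -- the second fundamental form II(X,Y) = D_X(Ω(Y)) − Ω(∇_X Y)
    (II : (E → E) → (E → E) → E → V)
    (hII : ∀ (X Y : E → E) p,
      II X Y p = fderiv ℝ (fun q => Ω q (Y q)) p (X p) - Ω p (nabla X Y p))
    -- II is skew-symmetric
    (hskew : ∀ X Y : E → E, ContDiff ℝ (⊤ : ℕ∞) X → ContDiff ℝ (⊤ : ℕ∞) Y →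
      ∀ p, II X Y p = - II Y X p)
    -- the curvature tensor R(X,Y)Z = ∇_Y ∇_X Z − ∇_X ∇_Y Z + ∇_{[X,Y]} Z
    (Rt : (E → E) → (E → E) → (E → E) → E → E)
    (hRt : ∀ (X Y Z : E → E) p,
      Rt X Y Z p = nabla Y (nabla X Z) p - nabla X (nabla Y Z) p
        + nabla (fun q => fderiv ℝ Y q (X q) - fderiv ℝ X q (Y q)) Z p) :
    -- (D_X II)(Y,Z) = D_X(II(Y,Z)) − II(∇_X Y, Z) − II(Y, ∇_X Z) = −Ω(R(Y,Z)X)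
    -- (in particular the left-hand side is tangential)
    ∀ X Y Z : E → E, ContDiff ℝ (⊤ : ℕ∞) X → ContDiff ℝ (⊤ : ℕ∞) Y →
      ContDiff ℝ (⊤ : ℕ∞) Z → ∀ p,
      fderiv ℝ (fun q => II Y Z q) p (X p) - II (nabla X Y) Z p - II Y (nabla X Z) p
        = - Ω p (Rt Y Z X p) := by
  -- abbreviation for smoothness
  have hle1 : ((⊤:ℕ∞) : WithTop ℕ∞) ≠ 0 := by simp
  have hle2 : ((⊤:ℕ∞) : WithTop ℕ∞) + 1 ≤ ((⊤:ℕ∞) : WithTop ℕ∞) := by exact_mod_cast le_top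
  -- Smoothness of `q ↦ Ω q (Z q)`
  have hsm : ∀ Z : E → E, ContDiff ℝ (⊤ : ℕ∞) Z →
      ContDiff ℝ (⊤ : ℕ∞) (fun q => Ω q (Z q)) := fun Z hZ => hΩ.clm_apply hZ
  -- the bilinear form as a continuous bilinear map
  let B2 : V →ₗ[ℝ] (V →L[ℝ] ℝ) :=
    (LinearMap.toContinuousLinearMap : (V →ₗ[ℝ] ℝ) ≃ₗ[ℝ] (V →L[ℝ] ℝ)).toLinearMap.comp B
  let Bc : V →L[ℝ] (V →L[ℝ] ℝ) := LinearMap.toContinuousLinearMap B2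
  have hBc : ∀ v w, Bc v w = B v w := fun v w => rfl
  -- smoothness of scalar functions built from g
  have hgs : ∀ X Y : E → E, ContDiff ℝ (⊤ : ℕ∞) X → ContDiff ℝ (⊤ : ℕ∞) Y →
      ContDiff ℝ (⊤ : ℕ∞) (fun q => g q (X q) (Y q)) := by
    intro X Y hX hY
    have : (fun q => g q (X q) (Y q)) = fun q => Bc (Ω q (X q)) (Ω q (Y q)) := by
      funext q; rw [hBc, ha]
    rw [this]
    exact (Bc.contDiff.comp (hsm X hX)).clm_apply (hsm Y hY)
  -- nondegeneracy of g
  have hgnd : ∀ p (v : E), (∀ u : E, g p v u = 0) → v = 0 := by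
    intro p v h
    by_contra hv
    exact absurd (h v) (ne_of_gt (hgpos p v hv))
  -- additivity of nabla in the second slot
  have slot2 : ∀ X Y₁ Y₂ : E → E, ContDiff ℝ (⊤ : ℕ∞) X → ContDiff ℝ (⊤ : ℕ∞) Y₁ →
      ContDiff ℝ (⊤ : ℕ∞) Y₂ → ∀ p,
      nabla X (fun q => Y₁ q - Y₂ q) p = nabla X Y₁ p - nabla X Y₂ p := by
    intro X Y₁ Y₂ hX h1 h2 p
    have hW : ContDiff ℝ (⊤ : ℕ∞) (fun q => Y₁ q - Y₂ q) := h1.sub h2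
    have key : ∀ u : E,
        g p (nabla X (fun q => Y₁ q - Y₂ q) p - (nabla X Y₁ p - nabla X Y₂ p)) u = 0 := by
      intro u
      have hU : ContDiff ℝ (⊤ : ℕ∞) (fun _ : E => u) := contDiff_const
      have m1 := hmetric X (fun q => Y₁ q - Y₂ q) (fun _ => u) hX hW hU p
      have m2 := hmetric X Y₁ (fun _ => u) hX h1 hU p
      have m3 := hmetric X Y₂ (fun _ => u) hX h2 hU p
      have hfe : (fun q => g q (Y₁ q - Y₂ q) u) = fun q => g q (Y₁ q) u - g q (Y₂ q) u := by
        funext q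
        rw [map_sub, LinearMap.sub_apply]
      rw [hfe, fderiv_fun_sub ((hgs Y₁ (fun _ => u) h1 hU).differentiable hle1 p)
        ((hgs Y₂ (fun _ => u) h2 hU).differentiable hle1 p)] at m1
      simp only [ContinuousLinearMap.sub_apply, map_sub, LinearMap.sub_apply] at m1 ⊢
      linarith [m1, m2, m3]
    exact sub_eq_zero.mp (hgnd p _ key)
  -- additivity of nabla in the first slot
  have slot1 : ∀ W₁ W₂ Z : E → E, ContDiff ℝ (⊤ : ℕ∞) W₁ → ContDiff ℝ (⊤ : ℕ∞) W₂ →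
      ContDiff ℝ (⊤ : ℕ∞) Z → ∀ p,
      nabla (fun q => W₁ q - W₂ q) Z p = nabla W₁ Z p - nabla W₂ Z p := by
    intro W₁ W₂ Z h1 h2 hZ p
    have hW : ContDiff ℝ (⊤ : ℕ∞) (fun q => W₁ q - W₂ q) := h1.sub h2
    have t1 := htf (fun q => W₁ q - W₂ q) Z hW hZ p
    have t2 := htf W₁ Z h1 hZ p
    have t3 := htf W₂ Z h2 hZ p
    have s2 := slot2 Z W₁ W₂ hZ h1 h2 p
    have hfd' : fderiv ℝ (fun q => W₁ q - W₂ q) p (Z p)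
        = fderiv ℝ W₁ p (Z p) - fderiv ℝ W₂ p (Z p) := by
      rw [fderiv_fun_sub ((h1.differentiable hle1) p) ((h2.differentiable hle1) p)]
      rfl
    have hms : fderiv ℝ Z p (W₁ p - W₂ p) = fderiv ℝ Z p (W₁ p) - fderiv ℝ Z p (W₂ p) :=
      map_sub _ _ _
    linear_combination (norm := module) t1 - t2 + t3 + s2 + hms - hfd'
  -- Jacobi identity for the Lie bracket of vector fields
  have hjac : ∀ X Y Z : E → E, ContDiff ℝ (⊤ : ℕ∞) X → ContDiff ℝ (⊤ : ℕ∞) Y →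
      ContDiff ℝ (⊤ : ℕ∞) Z → ∀ p,
      (fderiv ℝ Z p (fderiv ℝ Y p (X p) - fderiv ℝ X p (Y p))
        - fderiv ℝ (fun q => fderiv ℝ Y q (X q) - fderiv ℝ X q (Y q)) p (Z p))
      + (fderiv ℝ X p (fderiv ℝ Z p (Y p) - fderiv ℝ Y p (Z p))
        - fderiv ℝ (fun q => fderiv ℝ Z q (Y q) - fderiv ℝ Y q (Z q)) p (X p))
      + (fderiv ℝ Y p (fderiv ℝ X p (Z p) - fderiv ℝ Z p (X p))
        - fderiv ℝ (fun q => fderiv ℝ X q (Z q) - fderiv ℝ Z q (X q)) p (Y p)) = 0 := by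
    intro X Y Z hX hY hZ p
    have dsub : ∀ W U : E → E, ContDiff ℝ (⊤ : ℕ∞) W → ContDiff ℝ (⊤ : ℕ∞) U → ∀ v : E,
        fderiv ℝ (fun q => fderiv ℝ U q (W q) - fderiv ℝ W q (U q)) p v
          = (fderiv ℝ U p (fderiv ℝ W p v) + fderiv ℝ (fderiv ℝ U) p v (W p))
            - (fderiv ℝ W p (fderiv ℝ U p v) + fderiv ℝ (fderiv ℝ W) p v (U p)) := by
      intro W U hW hU v
      have dU : DifferentiableAt ℝ (fun q => fderiv ℝ U q (W q)) p :=
        ((hU.fderiv_right hle2).clm_apply hW).differentiable hle1 p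
      have dW : DifferentiableAt ℝ (fun q => fderiv ℝ W q (U q)) p :=
        ((hW.fderiv_right hle2).clm_apply hU).differentiable hle1 p
      rw [fderiv_fun_sub dU dW, ContinuousLinearMap.sub_apply,
        fderiv_clm_apply ((hU.fderiv_right hle2).differentiable hle1 p)
          ((hW.differentiable hle1) p),
        fderiv_clm_apply ((hW.fderiv_right hle2).differentiable hle1 p)
          ((hU.differentiable hle1) p)]
      rfl
    rw [dsub X Y hX hY (Z p), dsub Y Z hY hZ (X p), dsub Z X hZ hX (Y p)]
    have symY : fderiv ℝ (fderiv ℝ Y) p (Z p) (X p) = fderiv ℝ (fderiv ℝ Y) p (X p) (Z p) :=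
      second_derivative_symmetric (fun y => (hY.differentiable hle1 y).hasFDerivAt)
        ((hY.fderiv_right hle2).differentiable hle1 p).hasFDerivAt _ _
    have symX : fderiv ℝ (fderiv ℝ X) p (Z p) (Y p) = fderiv ℝ (fderiv ℝ X) p (Y p) (Z p) :=
      second_derivative_symmetric (fun y => (hX.differentiable hle1 y).hasFDerivAt)
        ((hX.fderiv_right hle2).differentiable hle1 p).hasFDerivAt _ _
    have symZ : fderiv ℝ (fderiv ℝ Z) p (X p) (Y p) = fderiv ℝ (fderiv ℝ Z) p (Y p) (X p) :=
      second_derivative_symmetric (fun y => (hZ.differentiable hle1 y).hasFDerivAt)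
        ((hZ.fderiv_right hle2).differentiable hle1 p).hasFDerivAt _ _
    simp only [map_sub]
    rw [symY, symX, symZ]
    abel
  -- smoothness of brackets
  have hbr : ∀ X Y : E → E, ContDiff ℝ (⊤ : ℕ∞) X → ContDiff ℝ (⊤ : ℕ∞) Y →
      ContDiff ℝ (⊤ : ℕ∞) (fun q => fderiv ℝ Y q (X q) - fderiv ℝ X q (Y q)) := by
    intro X Y hX hY
    exact ((hY.fderiv_right hle2).clm_apply hX).sub ((hX.fderiv_right hle2).clm_apply hY)
  -- first Bianchi identity
  have hbianchi : ∀ X Y Z : E → E, ContDiff ℝ (⊤ : ℕ∞) X → ContDiff ℝ (⊤ : ℕ∞) Y →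
      ContDiff ℝ (⊤ : ℕ∞) Z → ∀ p, Rt X Y Z p + Rt Y Z X p + Rt Z X Y p = 0 := by
    intro X Y Z hX hY hZ p
    rw [hRt X Y Z p, hRt Y Z X p, hRt Z X Y p]
    -- torsion identities for brackets
    have t1 := htf (fun q => fderiv ℝ Y q (X q) - fderiv ℝ X q (Y q)) Z (hbr X Y hX hY) hZ p
    have t2 := htf (fun q => fderiv ℝ Z q (Y q) - fderiv ℝ Y q (Z q)) X (hbr Y Z hY hZ) hX p
    have t3 := htf (fun q => fderiv ℝ X q (Z q) - fderiv ℝ Z q (X q)) Y (hbr Z X hZ hX) hY p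
    -- nabla of brackets via slot2
    have e1 : nabla Z (fun q => fderiv ℝ Y q (X q) - fderiv ℝ X q (Y q)) p
        = nabla Z (nabla X Y) p - nabla Z (nabla Y X) p := by
      rw [show (fun q => fderiv ℝ Y q (X q) - fderiv ℝ X q (Y q))
          = fun q => nabla X Y q - nabla Y X q from funext fun q => (htf X Y hX hY q).symm]
      exact slot2 Z (nabla X Y) (nabla Y X) hZ (hns X Y hX hY) (hns Y X hY hX) p
    have e2 : nabla X (fun q => fderiv ℝ Z q (Y q) - fderiv ℝ Y q (Z q)) p
        = nabla X (nabla Y Z) p - nabla X (nabla Z Y) p := by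
      rw [show (fun q => fderiv ℝ Z q (Y q) - fderiv ℝ Y q (Z q))
          = fun q => nabla Y Z q - nabla Z Y q from funext fun q => (htf Y Z hY hZ q).symm]
      exact slot2 X (nabla Y Z) (nabla Z Y) hX (hns Y Z hY hZ) (hns Z Y hZ hY) p
    have e3 : nabla Y (fun q => fderiv ℝ X q (Z q) - fderiv ℝ Z q (X q)) p
        = nabla Y (nabla Z X) p - nabla Y (nabla X Z) p := by
      rw [show (fun q => fderiv ℝ X q (Z q) - fderiv ℝ Z q (X q))
          = fun q => nabla Z X q - nabla X Z q from funext fun q => (htf Z X hZ hX q).symm]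
      exact slot2 Y (nabla Z X) (nabla X Z) hY (hns Z X hZ hX) (hns X Z hX hZ) p
    have hj := hjac X Y Z hX hY hZ p
    linear_combination (norm := module) t1 + t2 + t3 + e1 + e2 + e3 + hj
  -- expansion of the covariant derivative of II
  have hAexp : ∀ X Y Z : E → E, ContDiff ℝ (⊤ : ℕ∞) X → ContDiff ℝ (⊤ : ℕ∞) Y →
      ContDiff ℝ (⊤ : ℕ∞) Z → ∀ p,
      fderiv ℝ (fun q => II Y Z q) p (X p) - II (nabla X Y) Z p - II Y (nabla X Z) p
        = fderiv ℝ (fun q => Ω q (Z q)) p (fderiv ℝ Y p (X p))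
          + fderiv ℝ (fderiv ℝ (fun q => Ω q (Z q))) p (X p) (Y p)
          - II X (nabla Y Z) p - Ω p (nabla X (nabla Y Z) p)
          - fderiv ℝ (fun q => Ω q (Z q)) p (nabla X Y p)
          + Ω p (nabla (nabla X Y) Z p)
          - II Y (nabla X Z) p := by
    intro X Y Z hX hY hZ p
    have hF : ContDiff ℝ (⊤ : ℕ∞) (fun q => Ω q (Z q)) := hsm Z hZ
    have e0 : (fun q => II Y Z q)
        = fun q => fderiv ℝ (fun q' => Ω q' (Z q')) q (Y q) - Ω q (nabla Y Z q) :=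
      funext fun q => hII Y Z q
    have d1 : DifferentiableAt ℝ (fun q => fderiv ℝ (fun q' => Ω q' (Z q')) q (Y q)) p :=
      ((hF.fderiv_right hle2).clm_apply hY).differentiable hle1 p
    have d2 : DifferentiableAt ℝ (fun q => Ω q (nabla Y Z q)) p :=
      (hsm _ (hns Y Z hY hZ)).differentiable hle1 p
    rw [e0, fderiv_fun_sub d1 d2, ContinuousLinearMap.sub_apply,
      fderiv_clm_apply ((hF.fderiv_right hle2).differentiable hle1 p)
        ((hY.differentiable hle1) p)]
    have e2 : fderiv ℝ (fun q => Ω q (nabla Y Z q)) p (X p)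
        = II X (nabla Y Z) p + Ω p (nabla X (nabla Y Z) p) := by
      rw [hII X (nabla Y Z) p]; abel
    rw [e2, hII (nabla X Y) Z p]
    simp only [ContinuousLinearMap.add_apply, ContinuousLinearMap.comp_apply,
      ContinuousLinearMap.flip_apply]
    abel
  -- Codazzi-type identity: antisymmetrization in the first two slots gives curvature
  have codazzi : ∀ X Y Z : E → E, ContDiff ℝ (⊤ : ℕ∞) X → ContDiff ℝ (⊤ : ℕ∞) Y →
      ContDiff ℝ (⊤ : ℕ∞) Z → ∀ p,
      (fderiv ℝ (fun q => II Y Z q) p (X p) - II (nabla X Y) Z p - II Y (nabla X Z) p)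
      - (fderiv ℝ (fun q => II X Z q) p (Y p) - II (nabla Y X) Z p - II X (nabla Y Z) p)
        = Ω p (Rt X Y Z p) := by
    intro X Y Z hX hY hZ p
    rw [hAexp X Y Z hX hY hZ p, hAexp Y X Z hY hX hZ p]
    have hsym2 : fderiv ℝ (fderiv ℝ (fun q => Ω q (Z q))) p (X p) (Y p)
        = fderiv ℝ (fderiv ℝ (fun q => Ω q (Z q))) p (Y p) (X p) :=
      second_derivative_symmetric
        (fun y => ((hsm Z hZ).differentiable hle1 y).hasFDerivAt)
        (((hsm Z hZ).fderiv_right hle2).differentiable hle1 p).hasFDerivAt _ _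
    have ht := htf X Y hX hY p
    have hs : nabla (fun q => fderiv ℝ Y q (X q) - fderiv ℝ X q (Y q)) Z p
        = nabla (nabla X Y) Z p - nabla (nabla Y X) Z p := by
      rw [show (fun q => fderiv ℝ Y q (X q) - fderiv ℝ X q (Y q))
          = fun q => nabla X Y q - nabla Y X q from funext fun q => (htf X Y hX hY q).symm]
      exact slot1 (nabla X Y) (nabla Y X) Z (hns X Y hX hY) (hns Y X hY hX) hZ p
    rw [hRt X Y Z p, hs]
    -- linear identity: use that fderiv F p and Ω p are linear
    have hdf : fderiv ℝ (fun q => Ω q (Z q)) p (fderiv ℝ Y p (X p))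
        - fderiv ℝ (fun q => Ω q (Z q)) p (fderiv ℝ X p (Y p))
        - fderiv ℝ (fun q => Ω q (Z q)) p (nabla X Y p)
        + fderiv ℝ (fun q => Ω q (Z q)) p (nabla Y X p) = 0 := by
      rw [← map_sub, ← map_sub, ← map_add]
      rw [show fderiv ℝ Y p (X p) - fderiv ℝ X p (Y p) - nabla X Y p + nabla Y X p = 0 by
        rw [← ht]; abel]
      exact map_zero _
    have hom : Ω p (nabla Y (nabla X Z) p - nabla X (nabla Y Z) p
        + (nabla (nabla X Y) Z p - nabla (nabla Y X) Z p))
        = Ω p (nabla Y (nabla X Z) p) - Ω p (nabla X (nabla Y Z) p)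
          + (Ω p (nabla (nabla X Y) Z p) - Ω p (nabla (nabla Y X) Z p)) := by
      rw [map_add, map_sub, map_sub]
    rw [hom, hsym2]
    linear_combination (norm := module) hdf
  -- skewness of the covariant derivative of II in the last two slots
  have skewA : ∀ X Y Z : E → E, ContDiff ℝ (⊤ : ℕ∞) X → ContDiff ℝ (⊤ : ℕ∞) Y →
      ContDiff ℝ (⊤ : ℕ∞) Z → ∀ p,
      fderiv ℝ (fun q => II Y Z q) p (X p) - II (nabla X Y) Z p - II Y (nabla X Z) p
        = -(fderiv ℝ (fun q => II Z Y q) p (X p) - II (nabla X Z) Y p - II Z (nabla X Y) p) := by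
    intro X Y Z hX hY hZ p
    have e1 : (fun q => II Y Z q) = fun q => -II Z Y q := funext fun q => hskew Y Z hY hZ q
    rw [e1, fderiv_fun_neg, ContinuousLinearMap.neg_apply,
      hskew (nabla X Y) Z (hns X Y hX hY) hZ p,
      hskew Y (nabla X Z) hY (hns X Z hX hZ) p]
    abel
  -- the braid argument
  intro X Y Z hX hY hZ p
  have c1 := codazzi X Y Z hX hY hZ p
  have c2 := codazzi Y Z X hY hZ hX p
  have c3 := codazzi Z X Y hZ hX hY p
  have s1 := skewA X Y Z hX hY hZ p
  have s2 := skewA Y X Z hY hX hZ p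
  have s3 := skewA Z Y X hZ hY hX p
  have hb5 := hbianchi X Y Z hX hY hZ p
  have hΩb : Ω p (Rt X Y Z p) + Ω p (Rt Y Z X p) + Ω p (Rt Z X Y p) = 0 := by
    rw [← map_add, ← map_add, hb5, map_zero]
  have key : (2 : ℝ) • (fderiv ℝ (fun q => II Y Z q) p (X p)
        - II (nabla X Y) Z p - II Y (nabla X Z) p)
      = (2 : ℝ) • (- Ω p (Rt Y Z X p)) := by
    linear_combination (norm := module) c1 + s2 - c2 - s3 + c3 + s1 + hΩb
  exact smul_right_injective V (two_ne_zero) key
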